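/- PFO can express threshold counting quantifiers: for every PFO formula φ(y) with one free variable y and every integer k ≥ 1, there exists a PFO formula θ(x) with one free variable x such that for every string w over Σ of length N and every position n ∈ {1,…,N}, θ holds in w at x := n if and only if the number of positions m with 1 ≤ m < n at which φ holds is at least k. -/
import Mathlib


/-- The two variables of PFO. -/
inductive PVar : Type
  | x
  | y
deriving DecidableEq

/-- The other variable. -/
def PVar.other : PVar → PVar
  | .x => .y
  | .y => .x

/-- PFO formulas: atoms `π_a(v)`, Boolean connectives, bounded existential quantifiers
`∃ v < (other v) : φ` (binding `v`), and the unbounded quantifier `∃ v : φ`. -/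
inductive PFO (α : Type*) : Type _
  | atom : α → PVar → PFO α
  | conj : PFO α → PFO α → PFO α
  | neg : PFO α → PFO α
  | existsLt : PVar → PFO α → PFO α
  | existsUnb : PVar → PFO α → PFO α

/-- Free variables of a PFO formula; in `∃ v < (other v) : φ` the bounding
variable `other v` occurs free. -/
def PFO.freeVars {α : Type*} : PFO α → Finset PVar
  | .atom _ v => {v}
  | .conj φ₁ φ₂ => PFO.freeVars φ₁ ∪ PFO.freeVars φ₂
  | .neg φ => PFO.freeVars φ
  | .existsLt v φ => (PFO.freeVars φ).erase v ∪ {v.other}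
  | .existsUnb v φ => (PFO.freeVars φ).erase v

/-- Satisfaction of a PFO formula in string `w` under an assignment `ρ` of the
variables to (1-based) positions. -/
def PFO.Sat {α : Type*} (w : List α) : PFO α → (PVar → ℕ) → Prop
  | .atom a v, ρ => 1 ≤ ρ v ∧ w[ρ v - 1]? = some a
  | .conj φ₁ φ₂, ρ => PFO.Sat w φ₁ ρ ∧ PFO.Sat w φ₂ ρ
  | .neg φ, ρ => ¬ PFO.Sat w φ ρ
  | .existsLt v φ, ρ => ∃ m, 1 ≤ m ∧ m < ρ v.other ∧ PFO.Sat w φ (Function.update ρ v m)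
  | .existsUnb v φ, ρ => ∃ m, 1 ≤ m ∧ m ≤ w.length ∧ PFO.Sat w φ (Function.update ρ v m)

/-- A language is PFO-definable if it is the set of strings satisfying some PFO sentence. -/
def PFODefinable {α : Type*} (L : Set (List α)) : Prop :=
  ∃ φ : PFO α, PFO.freeVars φ = ∅ ∧ ∀ w : List α, w ∈ L ↔ ∀ ρ : PVar → ℕ, PFO.Sat w φ ρ

-- auxiliary lemmas

@[simp] lemma PVar.other_other (v : PVar) : v.other.other = v := by cases v <;> rfl

lemma PVar.other_inj {u v : PVar} : u.other = v.other ↔ u = v := by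
  cases u <;> cases v <;> simp [PVar.other]

lemma PFO.sat_congr {α : Type*} (w : List α) :
    ∀ (φ : PFO α) (ρ₁ ρ₂ : PVar → ℕ), (∀ v ∈ φ.freeVars, ρ₁ v = ρ₂ v) →
      (PFO.Sat w φ ρ₁ ↔ PFO.Sat w φ ρ₂)
  | .atom a v, ρ₁, ρ₂, h => by
      simp [PFO.Sat, h v (by simp [PFO.freeVars])]
  | .conj φ₁ φ₂, ρ₁, ρ₂, h => by
      simp only [PFO.Sat]
      rw [PFO.sat_congr w φ₁ ρ₁ ρ₂ (fun v hv => h v (by simp [PFO.freeVars, hv])),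
        PFO.sat_congr w φ₂ ρ₁ ρ₂ (fun v hv => h v (by simp [PFO.freeVars, hv]))]
  | .neg φ, ρ₁, ρ₂, h => by
      simp only [PFO.Sat]
      rw [PFO.sat_congr w φ ρ₁ ρ₂ (fun v hv => h v (by simpa [PFO.freeVars] using hv))]
  | .existsLt v φ, ρ₁, ρ₂, h => by
      simp only [PFO.Sat]
      have hb : ρ₁ v.other = ρ₂ v.other := h v.other (by simp [PFO.freeVars])
      rw [hb]
      refine exists_congr fun m => and_congr_right fun _ => and_congr_right fun _ => ?_
      refine PFO.sat_congr w φ _ _ fun u hu => ?_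
      by_cases huv : u = v
      · subst huv; simp
      · simp only [Function.update_of_ne huv]
        exact h u (by simp [PFO.freeVars, Finset.mem_erase, huv, hu])
  | .existsUnb v φ, ρ₁, ρ₂, h => by
      simp only [PFO.Sat]
      refine exists_congr fun m => and_congr_right fun _ => and_congr_right fun _ => ?_
      refine PFO.sat_congr w φ _ _ fun u hu => ?_
      by_cases huv : u = v
      · subst huv; simp
      · simp only [Function.update_of_ne huv]
        exact h u (by simp [PFO.freeVars, Finset.mem_erase, huv, hu])

def PFO.swap {α : Type*} : PFO α → PFO α
  | .atom a v => .atom a v.other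
  | .conj φ₁ φ₂ => .conj φ₁.swap φ₂.swap
  | .neg φ => .neg φ.swap
  | .existsLt v φ => .existsLt v.other φ.swap
  | .existsUnb v φ => .existsUnb v.other φ.swap

lemma PFO.mem_freeVars_swap {α : Type*} : ∀ (φ : PFO α) (v : PVar),
    v ∈ φ.swap.freeVars ↔ v.other ∈ φ.freeVars
  | .atom a u, v => by
      constructor <;> intro h
      · simp only [PFO.swap, PFO.freeVars, Finset.mem_singleton] at h
        simp [PFO.freeVars, h]
      · simp only [PFO.freeVars, Finset.mem_singleton] at h
        simp [PFO.swap, PFO.freeVars, ← h]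
  | .conj φ₁ φ₂, v => by
      simp [PFO.swap, PFO.freeVars, PFO.mem_freeVars_swap φ₁ v, PFO.mem_freeVars_swap φ₂ v]
  | .neg φ, v => by
      simp [PFO.swap, PFO.freeVars, PFO.mem_freeVars_swap φ v]
  | .existsLt u φ, v => by
      simp only [PFO.swap, PFO.freeVars, Finset.mem_union, Finset.mem_erase,
        Finset.mem_singleton, PFO.mem_freeVars_swap φ v, PVar.other_other]
      have h1 : (v = u.other) ↔ (v.other = u) := by cases u <;> cases v <;> simp [PVar.other]
      have h2 : (v = u) ↔ (v.other = u.other) := by cases u <;> cases v <;> simp [PVar.other]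
      simp only [ne_eq, h1, h2]
  | .existsUnb u φ, v => by
      simp only [PFO.swap, PFO.freeVars, Finset.mem_erase, PFO.mem_freeVars_swap φ v]
      have h1 : (v = u.other) ↔ (v.other = u) := by cases u <;> cases v <;> simp [PVar.other]
      simp only [ne_eq, h1]

lemma PFO.sat_swap {α : Type*} (w : List α) : ∀ (φ : PFO α) (ρ : PVar → ℕ),
    PFO.Sat w φ.swap ρ ↔ PFO.Sat w φ (ρ ∘ PVar.other)
  | .atom a v, ρ => by simp [PFO.swap, PFO.Sat]
  | .conj φ₁ φ₂, ρ => by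
      simp [PFO.swap, PFO.Sat, PFO.sat_swap w φ₁ ρ, PFO.sat_swap w φ₂ ρ]
  | .neg φ, ρ => by simp [PFO.swap, PFO.Sat, PFO.sat_swap w φ ρ]
  | .existsLt v φ, ρ => by
      simp only [PFO.swap, PFO.Sat, PVar.other_other, Function.comp_apply]
      refine exists_congr fun m => and_congr_right fun _ => and_congr_right fun _ => ?_
      rw [PFO.sat_swap w φ]
      refine PFO.sat_congr w φ _ _ fun u _ => ?_
      by_cases huv : u = v
      · subst huv; simp
      · simp only [Function.comp_apply, Function.update_of_ne huv,
          Function.update_of_ne (fun hc => huv (by simpa [PVar.other_inj] using hc) : u.other ≠ v.other)]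
  | .existsUnb v φ, ρ => by
      simp only [PFO.swap, PFO.Sat]
      refine exists_congr fun m => and_congr_right fun _ => and_congr_right fun _ => ?_
      rw [PFO.sat_swap w φ]
      refine PFO.sat_congr w φ _ _ fun u _ => ?_
      by_cases huv : u = v
      · subst huv; simp
      · simp only [Function.comp_apply, Function.update_of_ne huv,
          Function.update_of_ne (fun hc => huv (by simpa [PVar.other_inj] using hc) : u.other ≠ v.other)]

lemma finset_threshold (T : Finset ℕ) (k : ℕ) :
    k + 1 ≤ T.card ↔ ∃ m ∈ T, k ≤ (T.filter (fun m' => m' < m)).card := by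
  constructor
  · intro h
    have hne : T.Nonempty := Finset.card_pos.mp (by omega)
    refine ⟨T.max' hne, T.max'_mem hne, ?_⟩
    have heq : T.filter (fun m' => m' < T.max' hne) = T.erase (T.max' hne) := by
      ext t
      simp only [Finset.mem_filter, Finset.mem_erase]
      constructor
      · rintro ⟨ht, hlt⟩; exact ⟨Nat.ne_of_lt hlt, ht⟩
      · rintro ⟨hne', ht⟩; exact ⟨ht, lt_of_le_of_ne (T.le_max' t ht) hne'⟩
    rw [heq, Finset.card_erase_of_mem (T.max'_mem hne)]
    omega
  · rintro ⟨m, hm, hk⟩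
    have hsub : insert m (T.filter (fun m' => m' < m)) ⊆ T := by
      intro t ht
      rcases Finset.mem_insert.mp ht with h | h
      · exact h ▸ hm
      · exact (Finset.mem_filter.mp h).1
    have hnot : m ∉ T.filter (fun m' => m' < m) := by simp
    have := Finset.card_le_card hsub
    rw [Finset.card_insert_of_notMem hnot] at this
    omega

/-- The threshold formula: `thresh φ j` means "at least `j+1` positions below `x` satisfy φ". -/
def PFO.thresh {α : Type*} (φ : PFO α) : ℕ → PFO α
  | 0 => .existsLt .y φ
  | j+1 => .existsLt .y (.conj φ ((PFO.thresh φ j).swap))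

lemma PFO.thresh_freeVars {α : Type*} (φ : PFO α) (hφ : φ.freeVars ⊆ {PVar.y}) :
    ∀ j, (PFO.thresh φ j).freeVars ⊆ {PVar.x}
  | 0 => by
      intro v hv
      simp only [PFO.thresh, PFO.freeVars, Finset.mem_union, Finset.mem_erase,
        Finset.mem_singleton] at hv ⊢
      rcases hv with ⟨hne, hv⟩ | h
      · exact absurd (Finset.mem_singleton.mp (hφ hv)) hne
      · exact h
  | j+1 => by
      intro v hv
      simp only [PFO.thresh, PFO.freeVars, Finset.mem_union, Finset.mem_erase,
        Finset.mem_singleton] at hv ⊢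
      rcases hv with ⟨hne, hv | hv⟩ | h
      · exact absurd (Finset.mem_singleton.mp (hφ hv)) hne
      · have := Finset.mem_singleton.mp
          (PFO.thresh_freeVars φ hφ j ((PFO.mem_freeVars_swap _ v).mp hv))
        exact absurd (by cases v <;> simp [PVar.other] at this ⊢ <;> exact this) hne
      · exact h

lemma PFO.sat_update_y {α : Type*} (φ : PFO α) (hφ : φ.freeVars ⊆ {PVar.y})
    (w : List α) (ρ : PVar → ℕ) (m : ℕ) :
    PFO.Sat w φ (Function.update ρ PVar.y m) ↔ PFO.Sat w φ (fun _ => m) := by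
  refine PFO.sat_congr w φ _ _ fun v hv => ?_
  have : v = PVar.y := Finset.mem_singleton.mp (hφ hv)
  subst this; simp

open Classical in
lemma PFO.thresh_spec {α : Type*} (φ : PFO α) (hφ : φ.freeVars ⊆ {PVar.y}) :
    ∀ (j : ℕ) (w : List α) (n : ℕ) (ρ : PVar → ℕ), 1 ≤ n → n ≤ w.length → ρ PVar.x = n →
      (PFO.Sat w (PFO.thresh φ j) ρ ↔
        j + 1 ≤ ((Finset.Ico 1 n).filter (fun m => PFO.Sat w φ (fun _ => m))).card)
  | 0, w, n, ρ, hn1, hnl, hx => by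
      simp only [PFO.thresh, PFO.Sat]
      have hy : (PVar.y).other = PVar.x := rfl
      rw [hy, hx]
      constructor
      · rintro ⟨m, h1, h2, hsat⟩
        have hm : m ∈ (Finset.Ico 1 n).filter (fun m => PFO.Sat w φ (fun _ => m)) :=
          Finset.mem_filter.mpr ⟨Finset.mem_Ico.mpr ⟨h1, h2⟩,
            (PFO.sat_update_y φ hφ w ρ m).mp hsat⟩
        have := Finset.card_pos.mpr ⟨m, hm⟩
        omega
      · intro h
        have hpos : 0 < ((Finset.Ico 1 n).filter (fun m => PFO.Sat w φ (fun _ => m))).card := by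
          omega
        obtain ⟨m, hm⟩ := Finset.card_pos.mp hpos
        obtain ⟨hmI, hms⟩ := Finset.mem_filter.mp hm
        obtain ⟨h1, h2⟩ := Finset.mem_Ico.mp hmI
        exact ⟨m, h1, h2, (PFO.sat_update_y φ hφ w ρ m).mpr hms⟩
  | j+1, w, n, ρ, hn1, hnl, hx => by
      simp only [PFO.thresh, PFO.Sat]
      have hy : (PVar.y).other = PVar.x := rfl
      rw [hy, hx]
      rw [finset_threshold]
      constructor
      · rintro ⟨m, h1, h2, hsatφ, hsatθ⟩
        refine ⟨m, Finset.mem_filter.mpr ⟨Finset.mem_Ico.mpr ⟨h1, h2⟩,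
          (PFO.sat_update_y φ hφ w ρ m).mp hsatφ⟩, ?_⟩
        rw [PFO.sat_swap] at hsatθ
        have hx' : ((Function.update ρ PVar.y m) ∘ PVar.other) PVar.x = m := by
          simp [PVar.other]
        have := (PFO.thresh_spec φ hφ j w m _ h1 (le_of_lt (lt_of_lt_of_le h2 hnl)) hx').mp hsatθ
        have heq : (Finset.Ico 1 m).filter (fun m' => PFO.Sat w φ (fun _ => m')) =
            ((Finset.Ico 1 n).filter (fun m' => PFO.Sat w φ (fun _ => m'))).filter
              (fun m' => m' < m) := by
          rw [Finset.filter_filter]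
          ext t
          simp only [Finset.mem_filter, Finset.mem_Ico]
          constructor
          · rintro ⟨⟨ht1, ht2⟩, hts⟩; exact ⟨⟨ht1, lt_trans ht2 h2⟩, hts, ht2⟩
          · rintro ⟨⟨ht1, _⟩, hts, ht2⟩; exact ⟨⟨ht1, ht2⟩, hts⟩
        rw [heq] at this
        omega
      · rintro ⟨m, hm, hk⟩
        obtain ⟨hmI, hms⟩ := Finset.mem_filter.mp hm
        obtain ⟨h1, h2⟩ := Finset.mem_Ico.mp hmI
        refine ⟨m, h1, h2, (PFO.sat_update_y φ hφ w ρ m).mpr hms, ?_⟩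
        rw [PFO.sat_swap]
        have hx' : ((Function.update ρ PVar.y m) ∘ PVar.other) PVar.x = m := by
          simp [PVar.other]
        rw [PFO.thresh_spec φ hφ j w m _ h1 (le_of_lt (lt_of_lt_of_le h2 hnl)) hx']
        have heq : (Finset.Ico 1 m).filter (fun m' => PFO.Sat w φ (fun _ => m')) =
            ((Finset.Ico 1 n).filter (fun m' => PFO.Sat w φ (fun _ => m'))).filter
              (fun m' => m' < m) := by
          rw [Finset.filter_filter]
          ext t
          simp only [Finset.mem_filter, Finset.mem_Ico]
          constructor
          · rintro ⟨⟨ht1, ht2⟩, hts⟩; exact ⟨⟨ht1, lt_trans ht2 h2⟩, hts, ht2⟩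
          · rintro ⟨⟨ht1, _⟩, hts, ht2⟩; exact ⟨⟨ht1, ht2⟩, hts⟩
        rw [heq]
        omega


/-- PFO expresses threshold counting: for every PFO formula `φ(y)` with one
free variable `y` and every `k ≥ 1`, there is a PFO formula `θ(x)` with one free variable `x`
that holds at `x := n` iff the number of positions `m` with `1 ≤ m < n` satisfying `φ` at
`y := m` is at least `k`. -/
theorem pfo_threshold_counting {α : Type*} [Fintype α] (φ : PFO α)
    (hφ : PFO.freeVars φ ⊆ {PVar.y}) (k : ℕ) (hk : 1 ≤ k) :
    ∃ θ : PFO α, PFO.freeVars θ ⊆ {PVar.x} ∧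
      ∀ (w : List α) (n : ℕ) (ρ : PVar → ℕ), 1 ≤ n → n ≤ w.length → ρ PVar.x = n →
        (PFO.Sat w θ ρ ↔
          k ≤ {m : ℕ | 1 ≤ m ∧ m < n ∧ PFO.Sat w φ (Function.update ρ PVar.y m)}.ncard) := by
  
  classical
  refine ⟨PFO.thresh φ (k-1), PFO.thresh_freeVars φ hφ (k-1), fun w n ρ hn1 hnl hx => ?_⟩
  rw [PFO.thresh_spec φ hφ (k-1) w n ρ hn1 hnl hx]
  have hset : {m : ℕ | 1 ≤ m ∧ m < n ∧ PFO.Sat w φ (Function.update ρ PVar.y m)} =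
      ↑((Finset.Ico 1 n).filter (fun m => PFO.Sat w φ (fun _ => m))) := by
    ext m
    simp only [Set.mem_setOf_eq, Finset.coe_filter, Finset.mem_Ico, Set.mem_setOf_eq,
      PFO.sat_update_y φ hφ w ρ m]
    tauto
  rw [hset, Set.ncard_coe_finset]
  omega
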